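/- Let d ≥ 2 be an integer and let β be the swapping function associated to d. Then there exists a constant C > 0, depending only on d, such that for all a, b ∈ ℂ with |a|² = 1 + |b|², one has C^{−1}·log|a| ≤ β(b) ≤ C·log|a|. -/

import Mathlib

set_option maxHeartbeats 1000000


/-- `ε := 10⁻³·d⁻¹`. -/
noncomputable def swapEps (d : ℕ) : ℝ := (10 : ℝ) ^ (-3 : ℤ) * (d : ℝ)⁻¹

/-- The smallest positive real `r` with `r² − r³ = ε¹⁰ + ε²⁰·arsinh r`. -/
noncomputable def swapR (d : ℕ) : ℝ :=
  sInf {r : ℝ | 0 < r ∧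
    r ^ 2 - r ^ 3 = swapEps d ^ 10 + swapEps d ^ 20 * Real.arsinh r}

/-- The swapping function `β` associated to `d`. -/
noncomputable def swapBeta (d : ℕ) (z : ℂ) : ℝ :=
  if ‖z‖ ≤ swapR d then ‖z‖ ^ 2 - ‖z‖ ^ 3
  else swapEps d ^ 10 + swapEps d ^ 20 * Real.arsinh (‖z‖)

lemma swapEps_pos {d : ℕ} (hd : 2 ≤ d) : 0 < swapEps d := by
  have hd' : (0:ℝ) < (d:ℝ) := by exact_mod_cast Nat.lt_of_lt_of_le Nat.zero_lt_two hd
  unfold swapEps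
  positivity

lemma swapEps_le {d : ℕ} (hd : 2 ≤ d) : swapEps d ≤ 1/2000 := by
  have hd' : (2:ℝ) ≤ (d:ℝ) := by exact_mod_cast hd
  have h1 : ((d:ℝ))⁻¹ ≤ 1/2 := by
    rw [inv_le_iff_one_le_mul₀ (by linarith)]
    linarith
  unfold swapEps
  have h2 : ((10:ℝ) ^ (-3:ℤ)) = 1/1000 := by norm_num
  rw [h2]
  nlinarith [inv_nonneg.mpr (by linarith : (0:ℝ) ≤ (d:ℝ))]

lemma arsinh_def (t : ℝ) : Real.arsinh t = Real.log (t + Real.sqrt (1 + t ^ 2)) := rfl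

lemma half_log_le_arsinh {t : ℝ} (ht : 0 ≤ t) :
    Real.log (1 + t ^ 2) / 2 ≤ Real.arsinh t := by
  have hs : (0:ℝ) < Real.sqrt (1 + t ^ 2) := Real.sqrt_pos.mpr (by positivity)
  have h := Real.log_le_log hs (by linarith : Real.sqrt (1 + t ^ 2) ≤ t + Real.sqrt (1 + t ^ 2))
  rw [Real.log_sqrt (by positivity)] at h
  rw [arsinh_def]
  exact h

lemma arsinh_le_bound {t : ℝ} (ht : 0 ≤ t) :
    Real.arsinh t ≤ Real.log 2 + Real.log (1 + t ^ 2) / 2 := by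
  have hs : (0:ℝ) < Real.sqrt (1 + t ^ 2) := Real.sqrt_pos.mpr (by positivity)
  have hts : t ≤ Real.sqrt (1 + t ^ 2) := by
    nlinarith [Real.sq_sqrt (show (0:ℝ) ≤ 1 + t ^ 2 by positivity),
      Real.sqrt_nonneg (1 + t ^ 2), sq_nonneg (Real.sqrt (1 + t ^ 2) - t)]
  have h := Real.log_le_log (by linarith : (0:ℝ) < t + Real.sqrt (1 + t ^ 2))
    (by linarith : t + Real.sqrt (1 + t ^ 2) ≤ 2 * Real.sqrt (1 + t ^ 2))
  rw [Real.log_mul two_ne_zero (ne_of_gt hs), Real.log_sqrt (by positivity)] at h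
  rw [arsinh_def]
  exact h

lemma half_le_log {x : ℝ} (hx0 : 0 ≤ x) (hx1 : x ≤ 1) : x / 2 ≤ Real.log (1 + x) := by
  have h := Real.one_sub_inv_le_log_of_pos (show (0:ℝ) < 1 + x by linarith)
  have h2 : (1 + x)⁻¹ ≤ 1 - x / 2 := by
    rw [inv_le_iff_one_le_mul₀ (by linarith)]
    nlinarith
  linarith

lemma swapR_bounds {d : ℕ} (hd : 2 ≤ d) :
    swapEps d ^ 5 ≤ swapR d ∧ swapR d ≤ 1/2 := by
  have hε0 := swapEps_pos hd
  have hεle := swapEps_le hd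
  set ε := swapEps d with hεdef
  set S := {r : ℝ | 0 < r ∧ r ^ 2 - r ^ 3 = ε ^ 10 + ε ^ 20 * Real.arsinh r} with hS
  have hlow : ∀ r ∈ S, ε ^ 5 ≤ r := by
    rintro r ⟨hr0, hr⟩
    have ha : 0 ≤ Real.arsinh r := Real.arsinh_nonneg_iff.mpr hr0.le
    have h1 : ε ^ 10 ≤ r ^ 2 := by nlinarith [pow_pos hr0 3, mul_nonneg (pow_nonneg hε0.le 20) ha]
    nlinarith [pow_pos hε0 5, sq_nonneg (r - ε ^ 5), sq_nonneg (r + ε ^ 5)]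
  -- nonemptiness via IVT
  have hcont : ContinuousOn (fun r : ℝ => r ^ 2 - r ^ 3 - (ε ^ 10 + ε ^ 20 * Real.arsinh r))
      (Set.Icc 0 (1/2)) := by
    apply Continuous.continuousOn
    exact ((continuous_pow 2).sub (continuous_pow 3)).sub
      (continuous_const.add (continuous_const.mul Real.continuous_arsinh))
  have hεsmall : ε ^ 10 ≤ ε := pow_le_of_le_one hε0.le (by linarith) (by norm_num)
  have hεsmall2 : ε ^ 20 ≤ ε := pow_le_of_le_one hε0.le (by linarith) (by norm_num)
  have harsinh_half : Real.arsinh (1/2) ≤ 2 := by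
    have h := arsinh_le_bound (by norm_num : (0:ℝ) ≤ 1/2)
    have hlog2 : Real.log 2 ≤ 1 := by
      have := Real.log_le_sub_one_of_pos (by norm_num : (0:ℝ) < 2); linarith
    have hlog54 : Real.log (1 + (1/2:ℝ) ^ 2) ≤ 1 := by
      have := Real.log_le_sub_one_of_pos (show (0:ℝ) < 1 + (1/2:ℝ)^2 by norm_num); linarith
    linarith
  have harsinh_nn : 0 ≤ Real.arsinh (1/2 : ℝ) := Real.arsinh_nonneg_iff.mpr (by norm_num)
  have hf0 : (fun r : ℝ => r ^ 2 - r ^ 3 - (ε ^ 10 + ε ^ 20 * Real.arsinh r)) 0 ≤ 0 := by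
    simp only [Real.arsinh_zero]
    nlinarith [pow_pos hε0 10]
  have hfhalf : (0:ℝ) ≤ (fun r : ℝ => r ^ 2 - r ^ 3 - (ε ^ 10 + ε ^ 20 * Real.arsinh r)) (1/2) := by
    simp only
    have hε20nn : (0:ℝ) ≤ ε ^ 20 := by positivity
    nlinarith [mul_le_mul_of_nonneg_left harsinh_half hε20nn]
  have hmem : (0:ℝ) ∈ Set.Icc
      ((fun r : ℝ => r ^ 2 - r ^ 3 - (ε ^ 10 + ε ^ 20 * Real.arsinh r)) 0)
      ((fun r : ℝ => r ^ 2 - r ^ 3 - (ε ^ 10 + ε ^ 20 * Real.arsinh r)) (1/2)) :=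
    ⟨hf0, hfhalf⟩
  obtain ⟨x, hx, hfx⟩ := intermediate_value_Icc (by norm_num : (0:ℝ) ≤ 1/2) hcont hmem
  have hx0 : 0 < x := by
    rcases lt_or_eq_of_le hx.1 with h | h
    · exact h
    · exfalso
      rw [← h] at hfx
      simp only [Real.arsinh_zero] at hfx
      nlinarith [pow_pos hε0 10]
  have hxS : x ∈ S := ⟨hx0, by simp only at hfx; linarith⟩
  have hbdd : BddBelow S := ⟨ε ^ 5, hlow⟩
  constructor
  · exact le_csInf ⟨x, hxS⟩ hlow
  · exact le_trans (csInf_le hbdd hxS) hx.2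

theorem swapBeta_comparable_log (d : ℕ) (hd : 2 ≤ d) :
    ∃ C : ℝ, 0 < C ∧ ∀ a b : ℂ,
      ‖a‖ ^ 2 = 1 + ‖b‖ ^ 2 →
      C⁻¹ * Real.log (‖a‖) ≤ swapBeta d b ∧
      swapBeta d b ≤ C * Real.log (‖a‖) := by
  have hε0 := swapEps_pos hd
  have hεle := swapEps_le hd
  obtain ⟨hr1, hr2⟩ := swapR_bounds hd
  set ε := swapEps d with hεdef
  have hε1 : ε ≤ 1 := by linarith
  have hε20le : ε ^ 20 ≤ ε := pow_le_of_le_one hε0.le hε1 (by norm_num)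
  have hε10le : ε ^ 10 ≤ ε := pow_le_of_le_one hε0.le hε1 (by norm_num)
  have hε2010 : ε ^ 20 ≤ ε ^ 10 := pow_le_pow_of_le_one hε0.le hε1 (by norm_num)
  have hε20pos : (0:ℝ) < ε ^ 20 := by positivity
  have hinv : (10:ℝ) ≤ (ε ^ 20)⁻¹ := by
    have h : ε ^ 20 ≤ 1/10 := by linarith
    have := inv_anti₀ hε20pos h
    norm_num at this
    linarith
  refine ⟨(ε ^ 20)⁻¹, by positivity, fun a b hab => ?_⟩
  rw [inv_inv]
  set t := ‖b‖ with htdef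
  have ht0 : 0 ≤ t := norm_nonneg b
  set L := Real.log (1 + t ^ 2) with hLdef
  have hL0 : 0 ≤ L := Real.log_nonneg (by nlinarith)
  have hLle : L ≤ t ^ 2 := by
    have := Real.log_le_sub_one_of_pos (show (0:ℝ) < 1 + t ^ 2 by positivity)
    linarith
  have hloga : Real.log (‖a‖) = L / 2 := by
    have h : L = 2 * Real.log (‖a‖) := by
      rw [hLdef, ← hab, Real.log_pow]
      norm_num
    linarith
  rw [hloga]
  have harsinh_ge : L / 2 ≤ Real.arsinh t := half_log_le_arsinh ht0
  have harsinh_le : Real.arsinh t ≤ Real.log 2 + L / 2 := arsinh_le_bound ht0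
  have hlog2 : Real.log 2 ≤ 1 := by
    have := Real.log_le_sub_one_of_pos (by norm_num : (0:ℝ) < 2); linarith
  have hlog2nn : 0 ≤ Real.log 2 := Real.log_nonneg (by norm_num)
  unfold swapBeta
  rw [← htdef, ← hεdef]
  split_ifs with hcase
  · -- t ≤ swapR d ≤ 1/2
    have ht1 : t ≤ 1/2 := le_trans hcase hr2
    have ht2 : t ^ 2 ≤ 1/4 := by nlinarith
    have hLge : t ^ 2 / 2 ≤ L := half_le_log (by positivity) (by linarith)
    constructor
    · -- ε^20 * (L/2) ≤ t^2 - t^3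
      have h1 : ε ^ 20 * (L / 2) ≤ L / 2 :=
        mul_le_of_le_one_left (by positivity) (by linarith)
      nlinarith [mul_le_mul_of_nonneg_right ht1 (sq_nonneg t)]
    · -- t^2 - t^3 ≤ (ε^20)⁻¹ * (L/2)
      have h1 : 10 * (L / 2) ≤ (ε ^ 20)⁻¹ * (L / 2) :=
        mul_le_mul_of_nonneg_right hinv (by positivity)
      nlinarith [pow_nonneg ht0 3]
  · -- t > swapR d ≥ ε^5
    push_neg at hcase
    have htε : ε ^ 5 ≤ t := le_trans hr1 hcase.le
    have ht2 : ε ^ 10 ≤ t ^ 2 := by nlinarith [pow_pos hε0 5]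
    have harsnn : 0 ≤ Real.arsinh t := Real.arsinh_nonneg_iff.mpr ht0
    have hL2 : ε ^ 10 ≤ 2 * L := by
      have h1 : Real.log (1 + ε ^ 10) ≤ L :=
        Real.log_le_log (by positivity) (by linarith)
      have h2 : ε ^ 10 / 2 ≤ Real.log (1 + ε ^ 10) :=
        half_le_log (by positivity) (by linarith)
      linarith
    constructor
    · have h1 : ε ^ 20 * (L / 2) ≤ ε ^ 20 * Real.arsinh t :=
        mul_le_mul_of_nonneg_left harsinh_ge (by positivity)
      nlinarith [pow_pos hε0 10]
    · have h1 : ε ^ 20 * Real.arsinh t ≤ ε ^ 20 * (Real.log 2 + L / 2) :=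
        mul_le_mul_of_nonneg_left harsinh_le (by positivity)
      have h2 : ε ^ 20 * Real.log 2 ≤ ε ^ 10 := by
        nlinarith
      have h3 : ε ^ 20 * (L / 2) ≤ L / 2 :=
        mul_le_of_le_one_left (by positivity) (by linarith)
      have h4 : 10 * (L / 2) ≤ (ε ^ 20)⁻¹ * (L / 2) :=
        mul_le_mul_of_nonneg_right hinv (by positivity)
      nlinarith
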